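/- Let L be a language over a finite alphabet, L_k = { w : wx ∈ L for some word x of length k }, and L' the set of words that are factors of L_k for every k ∈ ℕ. Then L' is extendable: for each w ∈ L' there is a letter a with wa ∈ L'. -/

import Mathlib

/-- `x` is a factor (contiguous substring) of some word in the language `L`. -/
def IsFactor {A : Type*} (x : List A) (L : Set (List A)) : Prop :=
  ∃ w ∈ L, x <:+: w

/-- The complexity function of a language: number of `n`-length factors. -/
noncomputable def complexity {A : Type*} (L : Set (List A)) (n : ℕ) : ℕ :=
  Nat.card {x : List A // x.length = n ∧ IsFactor x L}

/-- `w` is a special factor of `L`. -/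
def IsSpecial {A : Type*} (w : List A) (L : Set (List A)) : Prop :=
  ∃ a b : A, a ≠ b ∧ IsFactor (w ++ [a]) L ∧ IsFactor (w ++ [b]) L

/-- A language is (right-)extendable. -/
def Extendable {A : Type*} (L : Set (List A)) : Prop :=
  ∀ w ∈ L, ∃ a : A, w ++ [a] ∈ L

private lemma factor_step {A : Type*} (L : Set (List A)) (k : ℕ) (u : List A)
    (h : IsFactor u {v : List A | ∃ x : List A, x.length = k + 1 ∧ v ++ x ∈ L}) :
    IsFactor u {v : List A | ∃ x : List A, x.length = k ∧ v ++ x ∈ L} := by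
  obtain ⟨v, ⟨x, hx, hvx⟩, hinf⟩ := h
  cases x with
  | nil => simp at hx
  | cons b x' =>
    refine ⟨v ++ [b], ⟨x', by simpa using hx, ?_⟩, hinf.trans (List.prefix_append v [b]).isInfix⟩
    rw [List.append_assoc]
    simpa using hvx

private lemma factor_desc {A : Type*} (L : Set (List A)) (u : List A) :
    ∀ d k : ℕ, IsFactor u {v : List A | ∃ x : List A, x.length = k + d ∧ v ++ x ∈ L} →
    IsFactor u {v : List A | ∃ x : List A, x.length = k ∧ v ++ x ∈ L} := by
  intro d
  induction d with
  | zero => intro k h; exact h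
  | succ d ih =>
    intro k h
    exact ih k (factor_step L (k + d) u h)

private lemma factor_ext {A : Type*} (L : Set (List A)) (k : ℕ) (w : List A)
    (h : IsFactor w {v : List A | ∃ x : List A, x.length = k + 1 ∧ v ++ x ∈ L}) :
    ∃ a : A, IsFactor (w ++ [a]) {v : List A | ∃ x : List A, x.length = k ∧ v ++ x ∈ L} := by
  obtain ⟨v, ⟨x, hx, hvx⟩, s, t, hst⟩ := h
  cases x with
  | nil => simp at hx
  | cons b x' =>
    have hmem : v ++ [b] ∈ {v : List A | ∃ x : List A, x.length = k ∧ v ++ x ∈ L} := by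
      refine ⟨x', by simpa using hx, ?_⟩
      rw [List.append_assoc]; simpa using hvx
    cases t with
    | nil =>
      refine ⟨b, v ++ [b], hmem, s, [], ?_⟩
      simp only [List.append_nil] at hst ⊢
      rw [← hst, List.append_assoc]
    | cons c t' =>
      refine ⟨c, v ++ [b], hmem, s, t' ++ [b], ?_⟩
      rw [← hst]
      simp

theorem stmt_18 {A : Type*} [Fintype A] (L : Set (List A)) :
    Extendable {w : List A |
      ∀ k : ℕ, IsFactor w {v : List A | ∃ x : List A, x.length = k ∧ v ++ x ∈ L}} := by
  intro w hw
  simp only [Set.mem_setOf_eq] at hw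
  choose f hf using fun k => factor_ext L k w (hw (k + 1))
  have : ∃ a : A, (f ⁻¹' {a}).Infinite := by
    by_contra h
    push_neg at h
    have : (Set.univ : Set ℕ).Finite := by
      have : (⋃ a : A, f ⁻¹' {a}) = Set.univ := by
        ext n; simp
      rw [← this]
      exact Set.finite_iUnion fun a => h a
    exact Set.infinite_univ this
  obtain ⟨a, ha⟩ := this
  refine ⟨a, fun k => ?_⟩
  obtain ⟨m, hm, hkm⟩ := ha.exists_gt k
  have hfm : IsFactor (w ++ [a]) {v : List A | ∃ x : List A, x.length = m ∧ v ++ x ∈ L} := by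
    have hm' : f m = a := hm
    rw [← hm']
    exact hf m
  have : m = k + (m - k) := by omega
  rw [this] at hfm
  exact factor_desc L (w ++ [a]) (m - k) k hfm
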